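/- Let Gamma be a finite subset of N^2 and lambda_Gamma(z,w) be the minimal eigenvalue of the complex Hessian H_{phi_Gamma}(z,w). Then there exist constants 0 < c <= C depending only on Gamma such that c * phi_{Gamma^{(1)}}(z,w) <= lambda_Gamma(z,w) * phi_{Gamma^{(2)}}(z,w) <= C * phi_{Gamma^{(1)}}(z,w) for all (z,w) in C^2. -/

import Mathlib

/-- Wirtinger derivative `∂/∂z` (first coordinate) of a function on `ℂ²`. -/
noncomputable def dz (f : ℂ × ℂ → ℂ) (p : ℂ × ℂ) : ℂ :=
  (1 / 2) * (fderiv ℝ f p (1, 0) - Complex.I * fderiv ℝ f p (Complex.I, 0))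

/-- Wirtinger derivative `∂/∂z̄` (first coordinate). -/
noncomputable def dzbar (f : ℂ × ℂ → ℂ) (p : ℂ × ℂ) : ℂ :=
  (1 / 2) * (fderiv ℝ f p (1, 0) + Complex.I * fderiv ℝ f p (Complex.I, 0))

/-- Wirtinger derivative `∂/∂w` (second coordinate). -/
noncomputable def dw (f : ℂ × ℂ → ℂ) (p : ℂ × ℂ) : ℂ :=
  (1 / 2) * (fderiv ℝ f p (0, 1) - Complex.I * fderiv ℝ f p (0, Complex.I))

/-- Wirtinger derivative `∂/∂w̄` (second coordinate). -/
noncomputable def dwbar (f : ℂ × ℂ → ℂ) (p : ℂ × ℂ) : ℂ :=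
  (1 / 2) * (fderiv ℝ f p (0, 1) + Complex.I * fderiv ℝ f p (0, Complex.I))

/-- The model monomial weight `φ_Γ(z,w) = ∑_{(α,β)∈Γ} |z|^{2α} |w|^{2β}`. -/
noncomputable def phiGamma (Γ : Finset (ℕ × ℕ)) (p : ℂ × ℂ) : ℝ :=
  ∑ q ∈ Γ, ‖p.1‖ ^ (2 * q.1) * ‖p.2‖ ^ (2 * q.2)

/-- `Γ⁽¹⁾ = {(α,β)+(γ,δ) : (α,β),(γ,δ) ∈ Γ linearly independent} - (1,1)`. -/
def GammaOne (Γ : Finset (ℕ × ℕ)) : Finset (ℕ × ℕ) :=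
  ((Γ ×ˢ Γ).filter (fun q => q.1.1 * q.2.2 ≠ q.1.2 * q.2.1)).image
    (fun q => (q.1.1 + q.2.1 - 1, q.1.2 + q.2.2 - 1))

/-- `Γ⁽²⁾ = (Γ_r - (1,0)) ∪ (Γ_u - (0,1))`. -/
def GammaTwo (Γ : Finset (ℕ × ℕ)) : Finset (ℕ × ℕ) :=
  (Γ.filter (fun q => q.1 ≠ 0)).image (fun q => (q.1 - 1, q.2)) ∪
    (Γ.filter (fun q => q.2 ≠ 0)).image (fun q => (q.1, q.2 - 1))

/-- The determinant of the complex Hessian of `φ_Γ` (a real number). -/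
noncomputable def detHessian (Γ : Finset (ℕ × ℕ)) (p : ℂ × ℂ) : ℝ :=
  letI φC : ℂ × ℂ → ℂ := fun q => (phiGamma Γ q : ℂ)
  (dz (dzbar φC) p * dw (dwbar φC) p - dz (dwbar φC) p * dw (dzbar φC) p).re

/-- The trace of the complex Hessian of `φ_Γ` (a real number). -/
noncomputable def trHessian (Γ : Finset (ℕ × ℕ)) (p : ℂ × ℂ) : ℝ :=
  letI φC : ℂ × ℂ → ℂ := fun q => (phiGamma Γ q : ℂ)
  (dz (dzbar φC) p + dw (dwbar φC) p).re

/-- The value of the Hermitian form of the complex Hessian of `φ_Γ` at `p` on the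
vector `v`, i.e. `(H_{φ_Γ}(p) v, v) = ∑_{j,k} ∂²φ/∂z_j∂z̄_k v_j v̄_k`. -/
noncomputable def hessForm (Γ : Finset (ℕ × ℕ)) (p : ℂ × ℂ) (v : ℂ × ℂ) : ℝ :=
  letI φC : ℂ × ℂ → ℂ := fun q => (phiGamma Γ q : ℂ)
  (dz (dzbar φC) p * v.1 * (starRingEnd ℂ) v.1
    + dz (dwbar φC) p * v.1 * (starRingEnd ℂ) v.2
    + dw (dzbar φC) p * v.2 * (starRingEnd ℂ) v.1
    + dw (dwbar φC) p * v.2 * (starRingEnd ℂ) v.2).re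

/-- The least eigenvalue `λ_Γ` of the complex Hessian of `φ_Γ`, as the infimum of the
Rayleigh quotient. -/
noncomputable def lamGamma (Γ : Finset (ℕ × ℕ)) (p : ℂ × ℂ) : ℝ :=
  sInf {r : ℝ | ∃ v : ℂ × ℂ, v ≠ 0 ∧ r = hessForm Γ p v / (‖v.1‖ ^ 2 + ‖v.2‖ ^ 2)}


open Complex


noncomputable def mono (a b c d : ℕ) (p : ℂ × ℂ) : ℂ :=
  p.1 ^ a * (starRingEnd ℂ) p.1 ^ b * p.2 ^ c * (starRingEnd ℂ) p.2 ^ d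

noncomputable def fstL : ℂ × ℂ →L[ℝ] ℂ := ContinuousLinearMap.fst ℝ ℂ ℂ
noncomputable def sndL : ℂ × ℂ →L[ℝ] ℂ := ContinuousLinearMap.snd ℝ ℂ ℂ
noncomputable def cfstL : ℂ × ℂ →L[ℝ] ℂ :=
  (Complex.conjCLE.toContinuousLinearMap).comp fstL
noncomputable def csndL : ℂ × ℂ →L[ℝ] ℂ :=
  (Complex.conjCLE.toContinuousLinearMap).comp sndL

noncomputable def monoD (a b c d : ℕ) (p : ℂ × ℂ) : ℂ × ℂ →L[ℝ] ℂ :=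
  ((a : ℂ) * mono (a-1) b c d p) • fstL + ((b : ℂ) * mono a (b-1) c d p) • cfstL
  + ((c : ℂ) * mono a b (c-1) d p) • sndL + ((d : ℂ) * mono a b c (d-1) p) • csndL

lemma hasFDerivAt_mono (a b c d : ℕ) (p : ℂ × ℂ) :
    HasFDerivAt (mono a b c d) (monoD a b c d p) p := by
  have h1 : HasFDerivAt (fun p : ℂ × ℂ => p.1 ^ a)
      (((a : ℂ) * p.1 ^ (a-1)) • fstL) p :=
    (hasDerivAt_pow a p.1).comp_hasFDerivAt p hasFDerivAt_fst
  have hc1 : HasFDerivAt (fun p : ℂ × ℂ => (starRingEnd ℂ) p.1) cfstL p :=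
    cfstL.hasFDerivAt
  have h2 : HasFDerivAt (fun p : ℂ × ℂ => (starRingEnd ℂ) p.1 ^ b)
      (((b : ℂ) * ((starRingEnd ℂ) p.1) ^ (b-1)) • cfstL) p :=
    (hasDerivAt_pow b ((starRingEnd ℂ) p.1)).comp_hasFDerivAt p hc1
  have h3 : HasFDerivAt (fun p : ℂ × ℂ => p.2 ^ c)
      (((c : ℂ) * p.2 ^ (c-1)) • sndL) p :=
    (hasDerivAt_pow c p.2).comp_hasFDerivAt p hasFDerivAt_snd
  have hc2 : HasFDerivAt (fun p : ℂ × ℂ => (starRingEnd ℂ) p.2) csndL p :=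
    csndL.hasFDerivAt
  have h4 : HasFDerivAt (fun p : ℂ × ℂ => (starRingEnd ℂ) p.2 ^ d)
      (((d : ℂ) * ((starRingEnd ℂ) p.2) ^ (d-1)) • csndL) p :=
    (hasDerivAt_pow d ((starRingEnd ℂ) p.2)).comp_hasFDerivAt p hc2
  have h := ((h1.mul h2).mul h3).mul h4
  refine h.congr_fderiv ?_
  apply ContinuousLinearMap.ext
  intro v
  simp [monoD, mono, fstL, cfstL, sndL, csndL, smul_smul]
  ring

lemma monoD_apply (a b c d : ℕ) (p v : ℂ × ℂ) :
    monoD a b c d p v =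
      ((a : ℂ) * mono (a-1) b c d p) * v.1 + ((b : ℂ) * mono a (b-1) c d p) * (starRingEnd ℂ) v.1
      + ((c : ℂ) * mono a b (c-1) d p) * v.2 + ((d : ℂ) * mono a b c (d-1) p) * (starRingEnd ℂ) v.2 := by
  simp [monoD, fstL, cfstL, sndL, csndL, smul_eq_mul]

variable {Γ : Finset (ℕ × ℕ)} (g : ℕ × ℕ → ℂ) (a b c d : ℕ × ℕ → ℕ)

lemma hasFDerivAt_msum (p : ℂ × ℂ) :
    HasFDerivAt (fun p => ∑ q ∈ Γ, g q * mono (a q) (b q) (c q) (d q) p)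
      (∑ q ∈ Γ, g q • monoD (a q) (b q) (c q) (d q) p) p :=
  HasFDerivAt.fun_sum fun q _ => (hasFDerivAt_mono (a q) (b q) (c q) (d q) p).const_mul (g q)

lemma fderiv_msum (p v : ℂ × ℂ) :
    fderiv ℝ (fun p => ∑ q ∈ Γ, g q * mono (a q) (b q) (c q) (d q) p) p v =
      ∑ q ∈ Γ, g q * monoD (a q) (b q) (c q) (d q) p v := by
  rw [(hasFDerivAt_msum g a b c d p).fderiv]
  simp [ContinuousLinearMap.sum_apply]

lemma dz_msum (p : ℂ × ℂ) :
    dz (fun p => ∑ q ∈ Γ, g q * mono (a q) (b q) (c q) (d q) p) p =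
      ∑ q ∈ Γ, g q * ((a q : ℂ) * mono (a q - 1) (b q) (c q) (d q) p) := by
  unfold dz
  rw [fderiv_msum, fderiv_msum, Finset.mul_sum, ← Finset.sum_sub_distrib, Finset.mul_sum]
  refine Finset.sum_congr rfl fun q _ => ?_
  rw [monoD_apply, monoD_apply]
  simp only [map_one, map_zero, Complex.conj_I]
  have hI := Complex.I_mul_I
  linear_combination (g q * ((b q : ℂ) * mono (a q) (b q - 1) (c q) (d q) p)
      - g q * ((a q : ℂ) * mono (a q - 1) (b q) (c q) (d q) p)) / 2 * hI

lemma dzbar_msum (p : ℂ × ℂ) :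
    dzbar (fun p => ∑ q ∈ Γ, g q * mono (a q) (b q) (c q) (d q) p) p =
      ∑ q ∈ Γ, g q * ((b q : ℂ) * mono (a q) (b q - 1) (c q) (d q) p) := by
  unfold dzbar
  rw [fderiv_msum, fderiv_msum, Finset.mul_sum, ← Finset.sum_add_distrib, Finset.mul_sum]
  refine Finset.sum_congr rfl fun q _ => ?_
  rw [monoD_apply, monoD_apply]
  simp only [map_one, map_zero, Complex.conj_I]
  have hI := Complex.I_mul_I
  linear_combination (g q * ((a q : ℂ) * mono (a q - 1) (b q) (c q) (d q) p)
      - g q * ((b q : ℂ) * mono (a q) (b q - 1) (c q) (d q) p)) / 2 * hI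

lemma dw_msum (p : ℂ × ℂ) :
    dw (fun p => ∑ q ∈ Γ, g q * mono (a q) (b q) (c q) (d q) p) p =
      ∑ q ∈ Γ, g q * ((c q : ℂ) * mono (a q) (b q) (c q - 1) (d q) p) := by
  unfold dw
  rw [fderiv_msum, fderiv_msum, Finset.mul_sum, ← Finset.sum_sub_distrib, Finset.mul_sum]
  refine Finset.sum_congr rfl fun q _ => ?_
  rw [monoD_apply, monoD_apply]
  simp only [map_one, map_zero, Complex.conj_I]
  have hI := Complex.I_mul_I
  linear_combination (g q * ((d q : ℂ) * mono (a q) (b q) (c q) (d q - 1) p)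
      - g q * ((c q : ℂ) * mono (a q) (b q) (c q - 1) (d q) p)) / 2 * hI

lemma dwbar_msum (p : ℂ × ℂ) :
    dwbar (fun p => ∑ q ∈ Γ, g q * mono (a q) (b q) (c q) (d q) p) p =
      ∑ q ∈ Γ, g q * ((d q : ℂ) * mono (a q) (b q) (c q) (d q - 1) p) := by
  unfold dwbar
  rw [fderiv_msum, fderiv_msum, Finset.mul_sum, ← Finset.sum_add_distrib, Finset.mul_sum]
  refine Finset.sum_congr rfl fun q _ => ?_
  rw [monoD_apply, monoD_apply]
  simp only [map_one, map_zero, Complex.conj_I]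
  have hI := Complex.I_mul_I
  linear_combination (g q * ((c q : ℂ) * mono (a q) (b q) (c q - 1) (d q) p)
      - g q * ((d q : ℂ) * mono (a q) (b q) (c q) (d q - 1) p)) / 2 * hI

lemma mono_diag (a c : ℕ) (p : ℂ × ℂ) :
    mono a a c c p = ((‖p.1‖^2)^a * (‖p.2‖^2)^c : ℝ) := by
  unfold mono
  have h1 : p.1 ^ a * (starRingEnd ℂ) p.1 ^ a = (((‖p.1‖^2 : ℝ) : ℂ))^a := by
    rw [← mul_pow, Complex.mul_conj']; norm_cast
  have h2 : p.2 ^ c * (starRingEnd ℂ) p.2 ^ c = (((‖p.2‖^2 : ℝ) : ℂ))^c := by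
    rw [← mul_pow, Complex.mul_conj']; norm_cast
  rw [h1, mul_assoc, h2]; push_cast; ring

lemma mono_up (n m : ℕ) (p : ℂ × ℂ) :
    mono n (n+1) (m+1) m p
      = ((starRingEnd ℂ) p.1 * p.2) * ((‖p.1‖^2)^n * (‖p.2‖^2)^m : ℝ) := by
  have := mono_diag n m p
  unfold mono at *
  rw [pow_succ, pow_succ]
  calc p.1 ^ n * ((starRingEnd ℂ) p.1 ^ n * (starRingEnd ℂ) p.1) * (p.2 ^ m * p.2) *
        (starRingEnd ℂ) p.2 ^ m
      = ((starRingEnd ℂ) p.1 * p.2) *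
        (p.1 ^ n * (starRingEnd ℂ) p.1 ^ n * p.2 ^ m * (starRingEnd ℂ) p.2 ^ m) := by ring
    _ = _ := by rw [this]

lemma mono_down (n m : ℕ) (p : ℂ × ℂ) :
    mono (n+1) n m (m+1) p
      = (p.1 * (starRingEnd ℂ) p.2) * ((‖p.1‖^2)^n * (‖p.2‖^2)^m : ℝ) := by
  have := mono_diag n m p
  unfold mono at *
  rw [pow_succ, pow_succ]
  calc p.1 ^ n * p.1 * (starRingEnd ℂ) p.1 ^ n * p.2 ^ m *
        ((starRingEnd ℂ) p.2 ^ m * (starRingEnd ℂ) p.2)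
      = (p.1 * (starRingEnd ℂ) p.2) *
        (p.1 ^ n * (starRingEnd ℂ) p.1 ^ n * p.2 ^ m * (starRingEnd ℂ) p.2 ^ m) := by ring
    _ = _ := by rw [this]

lemma phiC_eq (Γ : Finset (ℕ × ℕ)) :
    (fun p => ((phiGamma Γ p : ℝ) : ℂ)) = fun p => ∑ q ∈ Γ, (1:ℂ) * mono q.1 q.1 q.2 q.2 p := by
  funext p
  unfold phiGamma
  push_cast
  refine Finset.sum_congr rfl fun q _ => ?_
  rw [one_mul, mono_diag]
  push_cast
  rw [pow_mul, pow_mul]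

noncomputable def ArF (Γ : Finset (ℕ × ℕ)) (x y : ℝ) : ℝ :=
  ∑ q ∈ Γ, (q.1:ℝ)^2 * x^(q.1-1) * y^q.2
noncomputable def DrF (Γ : Finset (ℕ × ℕ)) (x y : ℝ) : ℝ :=
  ∑ q ∈ Γ, (q.2:ℝ)^2 * x^q.1 * y^(q.2-1)
noncomputable def ErF (Γ : Finset (ℕ × ℕ)) (x y : ℝ) : ℝ :=
  ∑ q ∈ Γ, (q.1:ℝ)*(q.2:ℝ) * x^(q.1-1) * y^(q.2-1)

lemma dzbar_phiC (Γ : Finset (ℕ × ℕ)) :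
    dzbar (fun p => ((phiGamma Γ p : ℝ) : ℂ))
      = fun p => ∑ q ∈ Γ, ((q.1 : ℂ)) * mono q.1 (q.1-1) q.2 q.2 p := by
  funext p
  rw [phiC_eq]
  exact (dzbar_msum (fun _ => (1:ℂ)) (fun q => q.1) (fun q => q.1) (fun q => q.2)
    (fun q => q.2) p).trans (Finset.sum_congr rfl fun q _ => (one_mul _))

lemma dwbar_phiC (Γ : Finset (ℕ × ℕ)) :
    dwbar (fun p => ((phiGamma Γ p : ℝ) : ℂ))
      = fun p => ∑ q ∈ Γ, ((q.2 : ℂ)) * mono q.1 q.1 q.2 (q.2-1) p := by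
  funext p
  rw [phiC_eq]
  exact (dwbar_msum (fun _ => (1:ℂ)) (fun q => q.1) (fun q => q.1) (fun q => q.2)
    (fun q => q.2) p).trans (Finset.sum_congr rfl fun q _ => (one_mul _))

lemma entry_zz (Γ : Finset (ℕ × ℕ)) (p : ℂ × ℂ) :
    dz (dzbar (fun q => ((phiGamma Γ q : ℝ) : ℂ))) p
      = ((ArF Γ (‖p.1‖^2) (‖p.2‖^2) : ℝ) : ℂ) := by
  rw [dzbar_phiC]
  refine (dz_msum (fun q => (q.1:ℂ)) (fun q => q.1) (fun q => q.1 - 1) (fun q => q.2)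
    (fun q => q.2) p).trans ?_
  unfold ArF
  push_cast
  refine Finset.sum_congr rfl fun q _ => ?_
  rw [mono_diag]
  push_cast
  ring

lemma entry_ww (Γ : Finset (ℕ × ℕ)) (p : ℂ × ℂ) :
    dw (dwbar (fun q => ((phiGamma Γ q : ℝ) : ℂ))) p
      = ((DrF Γ (‖p.1‖^2) (‖p.2‖^2) : ℝ) : ℂ) := by
  rw [dwbar_phiC]
  refine (dw_msum (fun q => (q.2:ℂ)) (fun q => q.1) (fun q => q.1) (fun q => q.2)
    (fun q => q.2 - 1) p).trans ?_
  unfold DrF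
  push_cast
  refine Finset.sum_congr rfl fun q _ => ?_
  rw [mono_diag]
  push_cast
  ring

lemma entry_zw (Γ : Finset (ℕ × ℕ)) (p : ℂ × ℂ) :
    dz (dwbar (fun q => ((phiGamma Γ q : ℝ) : ℂ))) p
      = ((starRingEnd ℂ) p.1 * p.2) * ((ErF Γ (‖p.1‖^2) (‖p.2‖^2) : ℝ) : ℂ) := by
  rw [dwbar_phiC]
  refine (dz_msum (fun q => (q.2:ℂ)) (fun q => q.1) (fun q => q.1) (fun q => q.2)
    (fun q => q.2 - 1) p).trans ?_
  unfold ErF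
  push_cast
  rw [Finset.mul_sum]
  refine Finset.sum_congr rfl fun q _ => ?_
  rcases q with ⟨α, β⟩
  match α, β with
  | 0, β => simp
  | α+1, 0 => simp
  | α+1, β+1 =>
    simp only [Nat.add_sub_cancel]
    rw [mono_up]
    push_cast
    ring

lemma entry_wz (Γ : Finset (ℕ × ℕ)) (p : ℂ × ℂ) :
    dw (dzbar (fun q => ((phiGamma Γ q : ℝ) : ℂ))) p
      = (p.1 * (starRingEnd ℂ) p.2) * ((ErF Γ (‖p.1‖^2) (‖p.2‖^2) : ℝ) : ℂ) := by
  rw [dzbar_phiC]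
  refine (dw_msum (fun q => (q.1:ℂ)) (fun q => q.1) (fun q => q.1 - 1) (fun q => q.2)
    (fun q => q.2) p).trans ?_
  unfold ErF
  push_cast
  rw [Finset.mul_sum]
  refine Finset.sum_congr rfl fun q _ => ?_
  rcases q with ⟨α, β⟩
  match α, β with
  | 0, β => simp
  | α+1, 0 => simp
  | α+1, β+1 =>
    simp only [Nat.add_sub_cancel]
    rw [mono_down]
    push_cast
    ring

noncomputable def Qform (a d : ℝ) (u : ℂ) (v : ℂ × ℂ) : ℝ :=
  a * ‖v.1‖^2 + d * ‖v.2‖^2 + 2 * (u * v.1 * (starRingEnd ℂ) v.2).re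

lemma hessForm_eq (Γ : Finset (ℕ × ℕ)) (p v : ℂ × ℂ) :
    hessForm Γ p v = Qform (ArF Γ (‖p.1‖^2) (‖p.2‖^2)) (DrF Γ (‖p.1‖^2) (‖p.2‖^2))
      (((starRingEnd ℂ) p.1 * p.2) * ((ErF Γ (‖p.1‖^2) (‖p.2‖^2) : ℝ) : ℂ)) v := by
  unfold hessForm
  rw [entry_zz, entry_zw, entry_wz, entry_ww]
  set A := ArF Γ (‖p.1‖^2) (‖p.2‖^2)
  set D := DrF Γ (‖p.1‖^2) (‖p.2‖^2)
  set E := ErF Γ (‖p.1‖^2) (‖p.2‖^2)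
  have h1 : (A : ℂ) * v.1 * (starRingEnd ℂ) v.1 = ((A * ‖v.1‖^2 : ℝ) : ℂ) := by
    rw [mul_assoc, Complex.mul_conj']; push_cast; ring
  have h4 : (D : ℂ) * v.2 * (starRingEnd ℂ) v.2 = ((D * ‖v.2‖^2 : ℝ) : ℂ) := by
    rw [mul_assoc, Complex.mul_conj']; push_cast; ring
  have h3 : p.1 * (starRingEnd ℂ) p.2 * (E : ℂ) * v.2 * (starRingEnd ℂ) v.1
      = (starRingEnd ℂ) ((starRingEnd ℂ) p.1 * p.2 * (E : ℂ) * v.1 * (starRingEnd ℂ) v.2) := by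
    simp only [map_mul, Complex.conj_conj, Complex.conj_ofReal]
    ring
  rw [h1, h3, h4, Qform]
  simp only [Complex.add_re, Complex.ofReal_re, Complex.conj_re]
  ring

noncomputable def muF (a d : ℝ) (u : ℂ) : ℝ :=
  (a + d - Real.sqrt ((a-d)^2 + 4*‖u‖^2))/2


lemma sqF_sq (a d : ℝ) (u : ℂ) :
    (Real.sqrt ((a-d)^2 + 4*‖u‖^2))^2 = (a-d)^2 + 4*‖u‖^2 :=
  Real.sq_sqrt (by positivity)

lemma sqF_le (a d : ℝ) (u : ℂ) (ha : 0 ≤ a) (hd : 0 ≤ d) (hdet : ‖u‖^2 ≤ a*d) :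
    Real.sqrt ((a-d)^2 + 4*‖u‖^2) ≤ a + d := by
  have h1 : (a-d)^2 + 4*‖u‖^2 ≤ (a+d)^2 := by nlinarith
  calc Real.sqrt ((a-d)^2 + 4*‖u‖^2) ≤ Real.sqrt ((a+d)^2) := Real.sqrt_le_sqrt h1
    _ = a + d := Real.sqrt_sq (by linarith)

lemma sqF_ge₁ (a d : ℝ) (u : ℂ) : a - d ≤ Real.sqrt ((a-d)^2 + 4*‖u‖^2) := by
  have h1 : |a-d| = Real.sqrt ((a-d)^2) := (Real.sqrt_sq_eq_abs _).symm
  have h2 : Real.sqrt ((a-d)^2) ≤ Real.sqrt ((a-d)^2 + 4*‖u‖^2) :=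
    Real.sqrt_le_sqrt (le_add_of_nonneg_right (by positivity))
  have := le_abs_self (a - d)
  linarith

lemma sqF_ge₂ (a d : ℝ) (u : ℂ) : d - a ≤ Real.sqrt ((a-d)^2 + 4*‖u‖^2) := by
  have h1 : |a-d| = Real.sqrt ((a-d)^2) := (Real.sqrt_sq_eq_abs _).symm
  have h2 : Real.sqrt ((a-d)^2) ≤ Real.sqrt ((a-d)^2 + 4*‖u‖^2) :=
    Real.sqrt_le_sqrt (le_add_of_nonneg_right (by positivity))
  have := neg_abs_le (a - d)
  linarith

lemma muF_nonneg (a d : ℝ) (u : ℂ) (ha : 0 ≤ a) (hd : 0 ≤ d) (hdet : ‖u‖^2 ≤ a*d) :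
    0 ≤ muF a d u := by
  have := sqF_le a d u ha hd hdet
  unfold muF; linarith

lemma muF_le_a (a d : ℝ) (u : ℂ) : muF a d u ≤ a := by
  have := sqF_ge₂ a d u
  unfold muF; linarith

lemma muF_le_d (a d : ℝ) (u : ℂ) : muF a d u ≤ d := by
  have := sqF_ge₁ a d u
  unfold muF; linarith

lemma muF_key (a d : ℝ) (u : ℂ) : (a - muF a d u) * (d - muF a d u) = ‖u‖^2 := by
  have h := sqF_sq a d u
  unfold muF
  linear_combination h / 4

lemma muF_tr_ge (a d : ℝ) (u : ℂ) (ha : 0 ≤ a) (hd : 0 ≤ d) (hdet : ‖u‖^2 ≤ a*d) :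
    a*d - ‖u‖^2 ≤ muF a d u * (a + d) := by
  have h := sqF_sq a d u
  unfold muF
  nlinarith [sq_nonneg (a + d - Real.sqrt ((a-d)^2 + 4*‖u‖^2))]

lemma muF_tr_le (a d : ℝ) (u : ℂ) (ha : 0 ≤ a) (hd : 0 ≤ d) (hdet : ‖u‖^2 ≤ a*d) :
    muF a d u * (a + d) ≤ 2*(a*d - ‖u‖^2) := by
  have h := sqF_sq a d u
  have h2 := sqF_le a d u ha hd hdet
  have h0 : 0 ≤ Real.sqrt ((a-d)^2 + 4*‖u‖^2) := Real.sqrt_nonneg _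
  unfold muF
  nlinarith

lemma norm_sq_pos_of_ne (v : ℂ × ℂ) (hv : v ≠ 0) : 0 < ‖v.1‖^2 + ‖v.2‖^2 := by
  rcases eq_or_ne v.1 0 with h1 | h1
  · have h2 : v.2 ≠ 0 := by
      intro h2; exact hv (Prod.ext h1 h2)
    have := norm_pos_iff.mpr h2
    positivity
  · have := norm_pos_iff.mpr h1
    positivity

lemma isLeast_rayleigh (a d : ℝ) (u : ℂ) (ha : 0 ≤ a) (hd : 0 ≤ d) (hdet : ‖u‖^2 ≤ a*d) :
    IsLeast {r : ℝ | ∃ v : ℂ × ℂ, v ≠ 0 ∧ r = Qform a d u v / (‖v.1‖^2 + ‖v.2‖^2)}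
      (muF a d u) := by
  constructor
  · -- membership: an eigenvector
    rcases eq_or_ne u 0 with hu | hu
    · subst hu
      rcases le_total a d with hle | hle
      · refine ⟨(1, 0), by simp, ?_⟩
        have : Real.sqrt ((a-d)^2 + 4*‖(0:ℂ)‖^2) = d - a := by
          simp only [norm_zero]
          rw [show (4:ℝ)*0^2 = 0 by ring, add_zero, Real.sqrt_sq_eq_abs,
            abs_of_nonpos (by linarith)]
          ring
        unfold muF Qform
        rw [this]
        norm_num
        ring
      · refine ⟨(0, 1), by simp, ?_⟩
        have : Real.sqrt ((a-d)^2 + 4*‖(0:ℂ)‖^2) = a - d := by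
          simp only [norm_zero]
          rw [show (4:ℝ)*0^2 = 0 by ring, add_zero, Real.sqrt_sq_eq_abs,
            _root_.abs_of_nonneg (by linarith)]
        unfold muF Qform
        rw [this]
        norm_num
    · set m := muF a d u with hm
      refine ⟨((starRingEnd ℂ) u, ((m - a : ℝ) : ℂ)), ?_, ?_⟩
      · intro h
        rw [Prod.ext_iff] at h
        exact hu (by simpa using congrArg (starRingEnd ℂ) h.1)
      · have hkey := muF_key a d u
        have hN : ‖(starRingEnd ℂ) u‖^2 + ‖((m - a : ℝ) : ℂ)‖^2 = ‖u‖^2 + (m-a)^2 := by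
          rw [RCLike.norm_conj, Complex.norm_real, Real.norm_eq_abs, _root_.sq_abs]
        have hQ : Qform a d u ((starRingEnd ℂ) u, ((m - a : ℝ) : ℂ))
            = a * ‖u‖^2 + d * (m-a)^2 + 2 * ((m-a) * ‖u‖^2) := by
          unfold Qform
          rw [RCLike.norm_conj, Complex.norm_real, Real.norm_eq_abs, _root_.sq_abs]
          congr 1
          have : u * (starRingEnd ℂ) u * (starRingEnd ℂ) ((m - a : ℝ) : ℂ)
              = (((‖u‖^2 * (m - a)) : ℝ) : ℂ) := by
            rw [Complex.mul_conj', Complex.conj_ofReal]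
            push_cast; ring
          rw [this, Complex.ofReal_re]
          ring
        rw [hQ, hN, eq_div_iff]
        · linear_combination (m - a) * hkey
        · have h1 : (0:ℝ) < ‖u‖ := norm_pos_iff.mpr hu
          have : (0:ℝ) < ‖u‖^2 + (m - a)^2 := by nlinarith [sq_nonneg (m - a)]
          exact ne_of_gt this
  · -- lower bound
    rintro r ⟨v, hv, rfl⟩
    have hN := norm_sq_pos_of_ne v hv
    rw [le_div_iff₀ hN]
    have hA' : (0:ℝ) ≤ a - muF a d u := by linarith [muF_le_a a d u]
    have hD' : (0:ℝ) ≤ d - muF a d u := by linarith [muF_le_d a d u]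
    have hkey := muF_key a d u
    have hsq : Real.sqrt (a - muF a d u) * Real.sqrt (d - muF a d u) = ‖u‖ := by
      rw [← Real.sqrt_mul hA', hkey, Real.sqrt_sq (norm_nonneg u)]
    have hre : -(‖u‖ * ‖v.1‖ * ‖v.2‖) ≤ (u * v.1 * (starRingEnd ℂ) v.2).re := by
      have h1 : |(u * v.1 * (starRingEnd ℂ) v.2).re| ≤ ‖u * v.1 * (starRingEnd ℂ) v.2‖ :=
        Complex.abs_re_le_norm _
      have h2 : ‖u * v.1 * (starRingEnd ℂ) v.2‖ = ‖u‖ * ‖v.1‖ * ‖v.2‖ := by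
        rw [norm_mul, norm_mul, RCLike.norm_conj]
      have := neg_abs_le (u * v.1 * (starRingEnd ℂ) v.2).re
      linarith
    unfold Qform
    nlinarith [sq_nonneg (Real.sqrt (a - muF a d u) * ‖v.1‖ - Real.sqrt (d - muF a d u) * ‖v.2‖),
      Real.sq_sqrt hA', Real.sq_sqrt hD', hsq, hre,
      mul_nonneg (norm_nonneg v.1) (norm_nonneg v.2)]

noncomputable def PhF (S : Finset (ℕ × ℕ)) (x y : ℝ) : ℝ := ∑ m ∈ S, x^m.1 * y^m.2

def PP (Γ : Finset (ℕ × ℕ)) : Finset ((ℕ × ℕ) × (ℕ × ℕ)) :=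
  (Γ ×ˢ Γ).filter (fun q => q.1.1 * q.2.2 ≠ q.1.2 * q.2.1)

noncomputable def tT (x y : ℝ) (q : (ℕ × ℕ) × (ℕ × ℕ)) : ℝ :=
  (q.1.1:ℝ)^2*(q.2.2:ℝ)^2 * x^(q.1.1-1+q.2.1) * y^(q.1.2+(q.2.2-1))
  - (q.1.1:ℝ)*(q.1.2:ℝ)*(q.2.1:ℝ)*(q.2.2:ℝ) * x^(1+(q.1.1-1)+(q.2.1-1)) * y^(1+(q.1.2-1)+(q.2.2-1))

noncomputable def wT (x y : ℝ) (q : (ℕ × ℕ) × (ℕ × ℕ)) : ℝ :=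
  (((q.1.1*q.2.2 : ℕ) : ℝ) - ((q.1.2*q.2.1 : ℕ) : ℝ))^2 * x^(q.1.1+q.2.1-1) * y^(q.1.2+q.2.2-1)

lemma det_eq (Γ : Finset (ℕ × ℕ)) (x y : ℝ) :
    ArF Γ x y * DrF Γ x y - x*y*(ErF Γ x y)^2 = ∑ q ∈ Γ ×ˢ Γ, tT x y q := by
  unfold ArF DrF ErF tT
  rw [Finset.sum_product, Finset.sum_mul_sum, sq, Finset.sum_mul_sum, Finset.mul_sum,
    ← Finset.sum_sub_distrib]
  refine Finset.sum_congr rfl fun q hq => ?_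
  rw [Finset.mul_sum, ← Finset.sum_sub_distrib]
  refine Finset.sum_congr rfl fun r hr => ?_
  simp only [pow_add, pow_one]
  ring

lemma tT_zero (x y : ℝ) (q : (ℕ × ℕ) × (ℕ × ℕ)) (h : q.1.1*q.2.2 = q.1.2*q.2.1) :
    tT x y q = 0 := by
  obtain ⟨⟨α, β⟩, ⟨γ, δ⟩⟩ := q
  simp only [tT] at *
  rcases α with _ | a <;> rcases β with _ | b <;> rcases γ with _ | c <;> rcases δ with _ | d
  all_goals try (push_cast; ring1)
  all_goals try (simp at h)
  · -- all succ
    simp only [Nat.add_sub_cancel]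
    have h' : ((a:ℝ)+1)*((d:ℝ)+1) = ((b:ℝ)+1)*((c:ℝ)+1) := by exact_mod_cast h
    push_cast
    linear_combination (((a:ℝ)+1)*((d:ℝ)+1)*x^(a+c+1)*y^(b+d+1)) * h'

lemma ns1 (n m : ℕ) : n + (m+1) - 1 = n + m := by omega
lemma ns2 (n m : ℕ) : (n+1) + m - 1 = n + m := by omega

lemma tT_pair (x y : ℝ) (q : (ℕ × ℕ) × (ℕ × ℕ)) (h : q.1.1*q.2.2 ≠ q.1.2*q.2.1) :
    tT x y q + tT x y (q.2, q.1) = wT x y q := by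
  obtain ⟨⟨α, β⟩, ⟨γ, δ⟩⟩ := q
  simp only [tT, wT] at *
  rcases α with _ | a <;> rcases β with _ | b <;> rcases γ with _ | c <;> rcases δ with _ | d <;>
    (try simp only [ns1, ns2, Nat.add_sub_cancel, Nat.zero_sub, Nat.sub_zero, Nat.add_zero,
      Nat.zero_add, Nat.mul_zero, Nat.zero_mul] at h ⊢) <;>
    first
      | exact absurd rfl h
      | (push_cast; ring1)

lemma my_sum_image_le {ι α : Type*} [DecidableEq α] (s : Finset ι) (f : ι → α) (g : α → ℝ)
    (hg : ∀ m, 0 ≤ g m) : ∑ m ∈ s.image f, g m ≤ ∑ q ∈ s, g (f q) := by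
  rw [Finset.sum_comp g f]
  refine Finset.sum_le_sum fun m hm => ?_
  have hcard : 1 ≤ (s.filter (fun q => f q = m)).card := by
    rw [Finset.mem_image] at hm
    obtain ⟨q, hq, rfl⟩ := hm
    exact Finset.card_pos.mpr ⟨q, Finset.mem_filter.mpr ⟨hq, rfl⟩⟩
  calc g m = 1 * g m := (one_mul _).symm
    _ ≤ (s.filter (fun q => f q = m)).card * g m := by
        apply mul_le_mul_of_nonneg_right _ (hg m); exact_mod_cast hcard
    _ = (s.filter (fun q => f q = m)).card • g m := by rw [nsmul_eq_mul]

lemma PP_symm (Γ : Finset (ℕ × ℕ)) (q : (ℕ × ℕ) × (ℕ × ℕ)) (h : q ∈ PP Γ) :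
    (q.2, q.1) ∈ PP Γ := by
  simp only [PP, Finset.mem_filter, Finset.mem_product] at *
  refine ⟨⟨h.1.2, h.1.1⟩, fun hc => h.2 ?_⟩
  calc q.1.1 * q.2.2 = q.2.2 * q.1.1 := mul_comm _ _
    _ = q.2.1 * q.1.2 := hc.symm
    _ = q.1.2 * q.2.1 := mul_comm _ _

lemma det_eq_PP (Γ : Finset (ℕ × ℕ)) (x y : ℝ) :
    ArF Γ x y * DrF Γ x y - x*y*(ErF Γ x y)^2 = ∑ q ∈ PP Γ, tT x y q := by
  rw [det_eq, ← Finset.sum_filter_add_sum_filter_not (Γ ×ˢ Γ)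
    (fun q => q.1.1 * q.2.2 ≠ q.1.2 * q.2.1) (tT x y)]
  have h0 : ∑ q ∈ (Γ ×ˢ Γ).filter (fun q => ¬(q.1.1 * q.2.2 ≠ q.1.2 * q.2.1)), tT x y q = 0 :=
    Finset.sum_eq_zero fun q hq =>
      tT_zero x y q (not_not.mp (Finset.mem_filter.mp hq).2)
  rw [h0, add_zero]
  rfl

lemma two_det (Γ : Finset (ℕ × ℕ)) (x y : ℝ) :
    2 * (ArF Γ x y * DrF Γ x y - x*y*(ErF Γ x y)^2) = ∑ q ∈ PP Γ, wT x y q := by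
  rw [det_eq_PP, two_mul]
  have hswap : ∑ q ∈ PP Γ, tT x y q = ∑ q ∈ PP Γ, tT x y (q.2, q.1) :=
    Finset.sum_nbij' (fun q => (q.2, q.1)) (fun q => (q.2, q.1))
      (PP_symm Γ) (PP_symm Γ) (fun a _ => rfl) (fun a _ => rfl) (fun a _ => rfl)
  nth_rewrite 2 [hswap]
  rw [← Finset.sum_add_distrib]
  refine Finset.sum_congr rfl fun q hq => ?_
  exact tT_pair x y q (Finset.mem_filter.mp hq).2

lemma PhF_nonneg (S : Finset (ℕ × ℕ)) (x y : ℝ) (hx : 0 ≤ x) (hy : 0 ≤ y) :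
    0 ≤ PhF S x y :=
  Finset.sum_nonneg fun m _ => by positivity

lemma ArF_nonneg (Γ : Finset (ℕ × ℕ)) (x y : ℝ) (hx : 0 ≤ x) (hy : 0 ≤ y) :
    0 ≤ ArF Γ x y :=
  Finset.sum_nonneg fun m _ => by positivity

lemma DrF_nonneg (Γ : Finset (ℕ × ℕ)) (x y : ℝ) (hx : 0 ≤ x) (hy : 0 ≤ y) :
    0 ≤ DrF Γ x y :=
  Finset.sum_nonneg fun m _ => by positivity

lemma one_le_crossSq (m n : ℕ) (h : m ≠ n) : (1:ℝ) ≤ ((m:ℝ) - (n:ℝ))^2 := by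
  rcases lt_or_gt_of_ne h with hlt | hlt
  · have h1 : (m:ℝ) + 1 ≤ (n:ℝ) := by exact_mod_cast hlt
    nlinarith
  · have h1 : (n:ℝ) + 1 ≤ (m:ℝ) := by exact_mod_cast hlt
    nlinarith

noncomputable def K1 (Γ : Finset (ℕ × ℕ)) : ℝ :=
  ∑ q ∈ PP Γ, (((q.1.1*q.2.2 : ℕ) : ℝ) - ((q.1.2*q.2.1 : ℕ) : ℝ))^2

noncomputable def K2 (Γ : Finset (ℕ × ℕ)) : ℝ :=
  ∑ q ∈ Γ, ((q.1:ℝ)^2 + (q.2:ℝ)^2)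

lemma K1_nonneg (Γ : Finset (ℕ × ℕ)) : 0 ≤ K1 Γ :=
  Finset.sum_nonneg fun q _ => sq_nonneg _

lemma K2_nonneg (Γ : Finset (ℕ × ℕ)) : 0 ≤ K2 Γ :=
  Finset.sum_nonneg fun q _ => by positivity

lemma L1 (Γ : Finset (ℕ × ℕ)) (x y : ℝ) (hx : 0 ≤ x) (hy : 0 ≤ y) :
    PhF (GammaOne Γ) x y ≤ 2 * (ArF Γ x y * DrF Γ x y - x*y*(ErF Γ x y)^2) := by
  rw [two_det]
  have h1 : PhF (GammaOne Γ) x y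
      ≤ ∑ q ∈ PP Γ, x^(q.1.1+q.2.1-1) * y^(q.1.2+q.2.2-1) := by
    exact my_sum_image_le (PP Γ) (fun q => (q.1.1 + q.2.1 - 1, q.1.2 + q.2.2 - 1))
      (fun m => x^m.1 * y^m.2) (fun m => by positivity)
  refine h1.trans (Finset.sum_le_sum fun q hq => ?_)
  have hc := one_le_crossSq (q.1.1*q.2.2) (q.1.2*q.2.1) (Finset.mem_filter.mp hq).2
  unfold wT
  nlinarith [mul_nonneg (pow_nonneg hx (q.1.1+q.2.1-1)) (pow_nonneg hy (q.1.2+q.2.2-1))]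

lemma L2 (Γ : Finset (ℕ × ℕ)) (x y : ℝ) (hx : 0 ≤ x) (hy : 0 ≤ y) :
    2 * (ArF Γ x y * DrF Γ x y - x*y*(ErF Γ x y)^2) ≤ K1 Γ * PhF (GammaOne Γ) x y := by
  rw [two_det, K1, Finset.sum_mul]
  refine Finset.sum_le_sum fun q hq => ?_
  have hmem : (q.1.1 + q.2.1 - 1, q.1.2 + q.2.2 - 1) ∈ GammaOne Γ :=
    Finset.mem_image_of_mem _ hq
  have hle : x^(q.1.1+q.2.1-1) * y^(q.1.2+q.2.2-1) ≤ PhF (GammaOne Γ) x y :=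
    Finset.single_le_sum (f := fun m => x^m.1 * y^m.2) (fun m _ => by positivity) hmem
  unfold wT
  nlinarith [sq_nonneg (((q.1.1*q.2.2 : ℕ) : ℝ) - ((q.1.2*q.2.1 : ℕ) : ℝ)),
    mul_nonneg (pow_nonneg hx (q.1.1+q.2.1-1)) (pow_nonneg hy (q.1.2+q.2.2-1))]

set_option maxHeartbeats 1000000 in
lemma L3 (Γ : Finset (ℕ × ℕ)) (x y : ℝ) (hx : 0 ≤ x) (hy : 0 ≤ y) :
    PhF (GammaTwo Γ) x y ≤ ArF Γ x y + DrF Γ x y := by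
  have him1 : ∑ m ∈ (Γ.filter (fun q => q.1 ≠ 0)).image (fun q => (q.1 - 1, q.2)),
      x^m.1 * y^m.2 ≤ ArF Γ x y := by
    refine le_trans (my_sum_image_le (Γ.filter (fun q => q.1 ≠ 0)) (fun q => (q.1 - 1, q.2))
      (fun m : ℕ × ℕ => x^m.1 * y^m.2) (fun m => by positivity)) ?_
    refine le_trans (Finset.sum_le_sum (f := fun q : ℕ × ℕ => x^(q.1-1) * y^q.2)
      (g := fun q : ℕ × ℕ => (q.1:ℝ)^2 * x^(q.1-1) * y^q.2) fun q hq => ?_) ?_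
    · have hq1 : 1 ≤ q.1 := Nat.one_le_iff_ne_zero.mpr (Finset.mem_filter.mp hq).2
      have h1 : (1:ℝ) ≤ (q.1:ℝ) := by exact_mod_cast hq1
      show x^(q.1-1) * y^q.2 ≤ (q.1:ℝ)^2 * x^(q.1-1) * y^q.2
      have h2 : (1:ℝ) ≤ (q.1:ℝ)^2 := by nlinarith
      have h3 := mul_le_mul_of_nonneg_right h2
        (mul_nonneg (pow_nonneg hx (q.1-1)) (pow_nonneg hy q.2))
      calc x^(q.1-1) * y^q.2 = 1*(x^(q.1-1) * y^q.2) := by ring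
        _ ≤ (q.1:ℝ)^2*(x^(q.1-1) * y^q.2) := h3
        _ = (q.1:ℝ)^2 * x^(q.1-1) * y^q.2 := by ring
    · exact Finset.sum_le_sum_of_subset_of_nonneg (Finset.filter_subset _ _)
        (fun q _ _ => by positivity)
  have him2 : ∑ m ∈ (Γ.filter (fun q => q.2 ≠ 0)).image (fun q => (q.1, q.2 - 1)),
      x^m.1 * y^m.2 ≤ DrF Γ x y := by
    refine le_trans (my_sum_image_le (Γ.filter (fun q => q.2 ≠ 0)) (fun q => (q.1, q.2 - 1))
      (fun m : ℕ × ℕ => x^m.1 * y^m.2) (fun m => by positivity)) ?_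
    refine le_trans (Finset.sum_le_sum (f := fun q : ℕ × ℕ => x^q.1 * y^(q.2-1))
      (g := fun q : ℕ × ℕ => (q.2:ℝ)^2 * x^q.1 * y^(q.2-1)) fun q hq => ?_) ?_
    · have hq1 : 1 ≤ q.2 := Nat.one_le_iff_ne_zero.mpr (Finset.mem_filter.mp hq).2
      have h1 : (1:ℝ) ≤ (q.2:ℝ) := by exact_mod_cast hq1
      show x^q.1 * y^(q.2-1) ≤ (q.2:ℝ)^2 * x^q.1 * y^(q.2-1)
      have h2 : (1:ℝ) ≤ (q.2:ℝ)^2 := by nlinarith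
      have h3 := mul_le_mul_of_nonneg_right h2
        (mul_nonneg (pow_nonneg hx q.1) (pow_nonneg hy (q.2-1)))
      calc x^q.1 * y^(q.2-1) = 1*(x^q.1 * y^(q.2-1)) := by ring
        _ ≤ (q.2:ℝ)^2*(x^q.1 * y^(q.2-1)) := h3
        _ = (q.2:ℝ)^2 * x^q.1 * y^(q.2-1) := by ring
    · exact Finset.sum_le_sum_of_subset_of_nonneg (Finset.filter_subset _ _)
        (fun q _ _ => by positivity)
  have hui := Finset.sum_union_inter
    (s₁ := (Γ.filter (fun q => q.1 ≠ 0)).image (fun q => (q.1 - 1, q.2)))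
    (s₂ := (Γ.filter (fun q => q.2 ≠ 0)).image (fun q => (q.1, q.2 - 1)))
    (f := fun m => x^m.1 * y^m.2)
  have hinter : (0:ℝ) ≤ ∑ m ∈ ((Γ.filter (fun q => q.1 ≠ 0)).image (fun q => (q.1 - 1, q.2)) ∩
      (Γ.filter (fun q => q.2 ≠ 0)).image (fun q => (q.1, q.2 - 1))), x^m.1 * y^m.2 :=
    Finset.sum_nonneg fun m _ => by positivity
  unfold PhF GammaTwo at *
  linarith

lemma L4 (Γ : Finset (ℕ × ℕ)) (x y : ℝ) (hx : 0 ≤ x) (hy : 0 ≤ y) :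
    ArF Γ x y + DrF Γ x y ≤ K2 Γ * PhF (GammaTwo Γ) x y := by
  have hA : ArF Γ x y ≤ ∑ q ∈ Γ, (q.1:ℝ)^2 * PhF (GammaTwo Γ) x y := by
    refine Finset.sum_le_sum fun q hq => ?_
    rcases Nat.eq_zero_or_pos q.1 with h0 | h0
    · simp [h0]
    · have hmem : (q.1 - 1, q.2) ∈ GammaTwo Γ := by
        apply Finset.mem_union_left
        exact Finset.mem_image_of_mem _ (Finset.mem_filter.mpr ⟨hq, Nat.pos_iff_ne_zero.mp h0⟩)
      have hle : x^(q.1-1) * y^q.2 ≤ PhF (GammaTwo Γ) x y :=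
        Finset.single_le_sum (f := fun m => x^m.1 * y^m.2) (fun m _ => by positivity) hmem
      nlinarith [sq_nonneg (q.1:ℝ), mul_nonneg (pow_nonneg hx (q.1-1)) (pow_nonneg hy q.2)]
  have hD : DrF Γ x y ≤ ∑ q ∈ Γ, (q.2:ℝ)^2 * PhF (GammaTwo Γ) x y := by
    refine Finset.sum_le_sum fun q hq => ?_
    rcases Nat.eq_zero_or_pos q.2 with h0 | h0
    · simp [h0]
    · have hmem : (q.1, q.2 - 1) ∈ GammaTwo Γ := by
        apply Finset.mem_union_right
        exact Finset.mem_image_of_mem _ (Finset.mem_filter.mpr ⟨hq, Nat.pos_iff_ne_zero.mp h0⟩)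
      have hle : x^q.1 * y^(q.2-1) ≤ PhF (GammaTwo Γ) x y :=
        Finset.single_le_sum (f := fun m => x^m.1 * y^m.2) (fun m _ => by positivity) hmem
      nlinarith [sq_nonneg (q.2:ℝ), mul_nonneg (pow_nonneg hx q.1) (pow_nonneg hy (q.2-1))]
  have hsum : ∑ q ∈ Γ, (q.1:ℝ)^2 * PhF (GammaTwo Γ) x y
      + ∑ q ∈ Γ, (q.2:ℝ)^2 * PhF (GammaTwo Γ) x y = K2 Γ * PhF (GammaTwo Γ) x y := by
    rw [K2, Finset.sum_mul, ← Finset.sum_add_distrib]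
    exact Finset.sum_congr rfl fun q _ => by ring
  linarith

lemma phiGamma_eq_PhF (S : Finset (ℕ × ℕ)) (p : ℂ × ℂ) :
    phiGamma S p = PhF S (‖p.1‖^2) (‖p.2‖^2) := by
  unfold phiGamma PhF
  exact Finset.sum_congr rfl fun q _ => by rw [pow_mul, pow_mul]

lemma norm_u_sq (Γ : Finset (ℕ × ℕ)) (p : ℂ × ℂ) :
    ‖((starRingEnd ℂ) p.1 * p.2) * ((ErF Γ (‖p.1‖^2) (‖p.2‖^2) : ℝ) : ℂ)‖^2
      = ‖p.1‖^2 * ‖p.2‖^2 * (ErF Γ (‖p.1‖^2) (‖p.2‖^2))^2 := by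
  rw [norm_mul, norm_mul, RCLike.norm_conj, Complex.norm_real, Real.norm_eq_abs,
    mul_pow, mul_pow, _root_.sq_abs]

lemma lamGamma_eq (Γ : Finset (ℕ × ℕ)) (p : ℂ × ℂ)
    (hdet : ‖p.1‖^2 * ‖p.2‖^2 * (ErF Γ (‖p.1‖^2) (‖p.2‖^2))^2
      ≤ ArF Γ (‖p.1‖^2) (‖p.2‖^2) * DrF Γ (‖p.1‖^2) (‖p.2‖^2)) :
    lamGamma Γ p = muF (ArF Γ (‖p.1‖^2) (‖p.2‖^2)) (DrF Γ (‖p.1‖^2) (‖p.2‖^2))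
      (((starRingEnd ℂ) p.1 * p.2) * ((ErF Γ (‖p.1‖^2) (‖p.2‖^2) : ℝ) : ℂ)) := by
  unfold lamGamma
  have hset : {r : ℝ | ∃ v : ℂ × ℂ, v ≠ 0 ∧ r = hessForm Γ p v / (‖v.1‖^2 + ‖v.2‖^2)}
      = {r : ℝ | ∃ v : ℂ × ℂ, v ≠ 0 ∧ r = Qform (ArF Γ (‖p.1‖^2) (‖p.2‖^2))
          (DrF Γ (‖p.1‖^2) (‖p.2‖^2))
          (((starRingEnd ℂ) p.1 * p.2) * ((ErF Γ (‖p.1‖^2) (‖p.2‖^2) : ℝ) : ℂ)) v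
          / (‖v.1‖^2 + ‖v.2‖^2)} := by
    simp only [hessForm_eq]
  rw [hset]
  refine (isLeast_rayleigh _ _ _ ?_ ?_ ?_).csInf_eq
  · exact ArF_nonneg Γ _ _ (by positivity) (by positivity)
  · exact DrF_nonneg Γ _ _ (by positivity) (by positivity)
  · rw [norm_u_sq]; exact hdet


/-- `φ_{Γ⁽¹⁾} ≈ λ_Γ ⬝ φ_{Γ⁽²⁾}` with constants depending only on `Γ`, where `λ_Γ` is the
least eigenvalue of the complex Hessian of `φ_Γ`. -/
theorem min_eigenvalue_comparable (Γ : Finset (ℕ × ℕ)) :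
    ∃ c C : ℝ, 0 < c ∧ c ≤ C ∧ ∀ p : ℂ × ℂ,
      c * phiGamma (GammaOne Γ) p ≤ lamGamma Γ p * phiGamma (GammaTwo Γ) p ∧
      lamGamma Γ p * phiGamma (GammaTwo Γ) p ≤ C * phiGamma (GammaOne Γ) p := by

  have hK1 := K1_nonneg Γ
  have hK2 := K2_nonneg Γ
  refine ⟨1/(2*(K2 Γ + 1)), K1 Γ + 1, by positivity, ?_, ?_⟩
  · have h : 1/(2*(K2 Γ + 1)) ≤ 1 := by
      rw [div_le_one (by positivity)]; linarith
    linarith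
  intro p
  have hx : (0:ℝ) ≤ ‖p.1‖^2 := by positivity
  have hy : (0:ℝ) ≤ ‖p.2‖^2 := by positivity
  set x := ‖p.1‖^2 with hxd
  set y := ‖p.2‖^2 with hyd
  set a := ArF Γ x y with had
  set d := DrF Γ x y with hdd
  set E := ErF Γ x y with hEd
  set Φ1 := PhF (GammaOne Γ) x y with hP1
  set Φ2 := PhF (GammaTwo Γ) x y with hP2
  have hΦ1 : 0 ≤ Φ1 := PhF_nonneg _ _ _ hx hy
  have hΦ2 : 0 ≤ Φ2 := PhF_nonneg _ _ _ hx hy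
  have ha : 0 ≤ a := ArF_nonneg Γ _ _ hx hy
  have hd : 0 ≤ d := DrF_nonneg Γ _ _ hx hy
  have hL1 : Φ1 ≤ 2*(a*d - x*y*E^2) := L1 Γ x y hx hy
  have hL2 : 2*(a*d - x*y*E^2) ≤ K1 Γ * Φ1 := L2 Γ x y hx hy
  have hL3 : Φ2 ≤ a + d := L3 Γ x y hx hy
  have hL4 : a + d ≤ K2 Γ * Φ2 := L4 Γ x y hx hy
  have hdet : x*y*E^2 ≤ a*d := by linarith
  set u := ((starRingEnd ℂ) p.1 * p.2) * ((E : ℝ) : ℂ) with hud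
  have hu : ‖u‖^2 = x*y*E^2 := norm_u_sq Γ p
  have hlam : lamGamma Γ p = muF a d u := lamGamma_eq Γ p hdet
  have h0 : 0 ≤ muF a d u := muF_nonneg a d u ha hd (by rw [hu]; exact hdet)
  have h5 : a*d - ‖u‖^2 ≤ muF a d u * (a+d) := muF_tr_ge a d u ha hd (by rw [hu]; exact hdet)
  have h6 : muF a d u * (a+d) ≤ 2*(a*d - ‖u‖^2) := muF_tr_le a d u ha hd (by rw [hu]; exact hdet)
  rw [hu] at h5 h6
  rw [hlam, phiGamma_eq_PhF, phiGamma_eq_PhF, ← hxd, ← hyd, ← hP1, ← hP2]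
  constructor
  · -- lower bound
    rw [div_mul_eq_mul_div, div_le_iff₀ (by positivity)]
    have h7 : muF a d u * (a + d) ≤ muF a d u * ((K2 Γ + 1) * Φ2) :=
      mul_le_mul_of_nonneg_left (by nlinarith) h0
    nlinarith
  · -- upper bound
    have h8 : muF a d u * Φ2 ≤ muF a d u * (a + d) :=
      mul_le_mul_of_nonneg_left hL3 h0
    nlinarith
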